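/- In the channel model with Markov encoders φ_1,…,φ_n, define the policy-evaluation functions J_t on belief states by: J_{n+1}(σ, u, w) := Σ_{(π,η)} σ(π,η) · (1 − max_{w̃} π(w̃)), and for t = n down to 1, J_t(σ, u, w) := Σ_{y,z} Q^f(y | φ_t(w,u)) · Q^b(z | y) · J_{t+1}(G¹(σ, φ_t, z, u, w), G²(u, φ_t, z, w), w). Then for every 1 ≤ t ≤ n+1, every w ∈ 𝒲 and every z_{1:t-1} ∈ 𝒵^{t-1} with P(W = w, Z_{1:t-1} = z_{1:t-1}) > 0, with u_t ∈ 𝒰 the memory determined by (w, z_{1:t-1}) via G² and σ_t the conditional law of (Π_{t-1}, H_{t-1}) given (W = w, Z_{1:t-1} = z_{1:t-1}), one has E[1 − max_{w̃} Π_n(w̃) | W = w, Z_{1:t-1} = z_{1:t-1}] = J_t(σ_t, u_t, w). In particular the error probability of φ with MAP decoding equals (1/|𝒲|) Σ_w J_1(σ₀, u₁, w), where σ₀ is the point mass at (uniform on 𝒲, w ↦ point mass at u₁). -/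

import Mathlib

open scoped ENNReal Classical
open Finset

namespace NoisyFeedback

variable {W X Y Z U : Type*}

/-- Memory evolution: `mem G2 u1 φ w t zs` is the sender's memory after having
observed the feedback symbols `zs = z_{1:t}`. -/
def mem (G2 : U → (W × U → X) → Z → W → U) (u1 : U) (φ : ℕ → W × U → X) (w : W) :
    (t : ℕ) → (Fin t → Z) → U
  | 0, _ => u1
  | t + 1, zs => G2 (mem G2 u1 φ w t (Fin.init zs)) (φ t) (zs (Fin.last t)) w

variable [Fintype W] [Fintype X] [Fintype Y] [Fintype Z] [Fintype U]

/-- Joint pmf `P(W = w, Y_{1:t} = ys, Z_{1:t} = zs)` of the channel model with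
Markov encoders `φ`. -/
noncomputable def jointP (Qf : X → PMF Y) (Qb : Y → PMF Z)
    (G2 : U → (W × U → X) → Z → W → U) (u1 : U) (φ : ℕ → W × U → X)
    (t : ℕ) (w : W) (ys : Fin t → Y) (zs : Fin t → Z) : ℝ≥0∞ :=
  (Fintype.card W : ℝ≥0∞)⁻¹ *
    ∏ i : Fin t,
      Qf (φ i (w, mem G2 u1 φ w i (fun j => zs (Fin.castLE i.2.le j)))) (ys i) *
        Qb (ys i) (zs i)

/-- `P(Y_{1:t} = ys)`. -/
noncomputable def probY (Qf : X → PMF Y) (Qb : Y → PMF Z)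
    (G2 : U → (W × U → X) → Z → W → U) (u1 : U) (φ : ℕ → W × U → X)
    (t : ℕ) (ys : Fin t → Y) : ℝ≥0∞ :=
  ∑ w : W, ∑ zs : Fin t → Z, jointP Qf Qb G2 u1 φ t w ys zs

/-- `P(W = w, Y_{1:t} = ys)`. -/
noncomputable def probWY (Qf : X → PMF Y) (Qb : Y → PMF Z)
    (G2 : U → (W × U → X) → Z → W → U) (u1 : U) (φ : ℕ → W × U → X)
    (t : ℕ) (ys : Fin t → Y) (w : W) : ℝ≥0∞ :=
  ∑ zs : Fin t → Z, jointP Qf Qb G2 u1 φ t w ys zs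

/-- `P(W = w, Z_{1:t} = zs)`. -/
noncomputable def probWZ (Qf : X → PMF Y) (Qb : Y → PMF Z)
    (G2 : U → (W × U → X) → Z → W → U) (u1 : U) (φ : ℕ → W × U → X)
    (t : ℕ) (w : W) (zs : Fin t → Z) : ℝ≥0∞ :=
  ∑ ys : Fin t → Y, jointP Qf Qb G2 u1 φ t w ys zs

/-- `P(W = w, U_{t+1} = u, Y_{1:t} = ys)` (memory after `t` feedback symbols). -/
noncomputable def probWUY (Qf : X → PMF Y) (Qb : Y → PMF Z)
    (G2 : U → (W × U → X) → Z → W → U) (u1 : U) (φ : ℕ → W × U → X)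
    (t : ℕ) (ys : Fin t → Y) (w : W) (u : U) : ℝ≥0∞ :=
  ∑ zs : Fin t → Z,
    if mem G2 u1 φ w t zs = u then jointP Qf Qb G2 u1 φ t w ys zs else 0


/-- Belief states of the receiver: a belief `π` on the message together with, for each
message `w`, a belief `η w` on the sender's memory. -/
@[reducible] def Belief (W U : Type*) : Type _ := (W → ℝ≥0∞) × (W → U → ℝ≥0∞)

/-- Update map `F¹` of the receiver's belief on the message. -/
noncomputable def F1 (Qf : X → PMF Y) (p : Belief W U) (φ : W × U → X) (y : Y) :
    W → ℝ≥0∞ := fun w =>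
  p.1 w * (∑ u : U, p.2 w u * Qf (φ (w, u)) y) /
    ∑ w' : W, p.1 w' * ∑ u : U, p.2 w' u * Qf (φ (w', u)) y

/-- Update map `F²` of the receiver's conditional belief on the sender's memory. -/
noncomputable def F2 (Qf : X → PMF Y) (Qb : Y → PMF Z)
    (G2 : U → (W × U → X) → Z → W → U) (p : Belief W U) (φ : W × U → X) (y : Y) :
    W → U → ℝ≥0∞ := fun w u' =>
  (∑ u : U, ∑ z : Z,
      p.2 w u * Qf (φ (w, u)) y * Qb y z * (if u' = G2 u φ z w then 1 else 0)) /
    ∑ u : U, p.2 w u * Qf (φ (w, u)) y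

/-- Combined belief update `F = (F¹, F²)`. -/
noncomputable def Fb (Qf : X → PMF Y) (Qb : Y → PMF Z)
    (G2 : U → (W × U → X) → Z → W → U) (p : Belief W U) (φ : W × U → X) (y : Y) :
    Belief W U :=
  (F1 Qf p φ y, F2 Qf Qb G2 p φ y)

/-- Sender belief update `G¹`: update of the sender's belief `σ` over receiver belief
states upon transmitting with encoding function `φ` (with memory `u`, message `w`)
and receiving feedback `z`. -/
noncomputable def G1 (Qf : X → PMF Y) (Qb : Y → PMF Z)
    (G2 : U → (W × U → X) → Z → W → U) (σ : Belief W U → ℝ≥0∞)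
    (φ : W × U → X) (z : Z) (u : U) (w : W) : Belief W U → ℝ≥0∞ := fun b =>
  (∑' p : Belief W U, σ p * ∑ y : Y,
      Qf (φ (w, u)) y * Qb y z * (if b = Fb Qf Qb G2 p φ y then 1 else 0)) /
    ∑ y : Y, Qf (φ (w, u)) y * Qb y z

/-- Initial belief state: uniform on the messages, point mass at `u1` on the memory. -/
noncomputable def b0 [Fintype W] (u1 : U) : Belief W U :=
  (fun _ => (Fintype.card W : ℝ≥0∞)⁻¹, fun _ u => if u = u1 then 1 else 0)

/-- Initial sender belief: point mass at the initial belief state `b0`. -/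
noncomputable def σ0 [Fintype W] (u1 : U) : Belief W U → ℝ≥0∞ := fun b =>
  if b = b0 u1 then 1 else 0

/-- The receiver belief process `(Π_t, H_t)` as a function of the channel outputs,
under the Markov encoders `φ`. -/
noncomputable def beliefs (Qf : X → PMF Y) (Qb : Y → PMF Z)
    (G2 : U → (W × U → X) → Z → W → U) (u1 : U) (φ : ℕ → W × U → X) :
    (t : ℕ) → (Fin t → Y) → Belief W U
  | 0, _ => b0 u1
  | t + 1, ys =>
      Fb Qf Qb G2 (beliefs Qf Qb G2 u1 φ t (Fin.init ys)) (φ t) (ys (Fin.last t))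

/-- Policy-evaluation functions, indexed by the number `k` of remaining transmissions:
`Jk φ n k = J_{n+1-k}` of Statement 7, so that `Jk φ n 0 = J_{n+1}` is the terminal
expected error `Σ_{(π,η)} σ(π,η) (1 - max_w̃ π(w̃))` and `Jk φ n (n+1-t) = J_t`. -/
noncomputable def Jk (Qf : X → PMF Y) (Qb : Y → PMF Z)
    (G2 : U → (W × U → X) → Z → W → U) (φ : ℕ → W × U → X) (n : ℕ) :
    ℕ → (Belief W U → ℝ≥0∞) → U → W → ℝ≥0∞
  | 0, σ, _, _ => ∑' p : Belief W U, σ p * (1 - univ.sup fun w' : W => p.1 w')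
  | k + 1, σ, u, w =>
      ∑ y : Y, ∑ z : Z,
        Qf (φ (n - (k + 1)) (w, u)) y * Qb y z *
          Jk Qf Qb G2 φ n k
            (G1 Qf Qb G2 σ (φ (n - (k + 1))) z u w)
            (G2 u (φ (n - (k + 1))) z w) w

section Aux
variable (Qf : X → PMF Y) (Qb : Y → PMF Z) (G2 : U → (W × U → X) → Z → W → U)
  (u1 : U) (φ : ℕ → W × U → X)

theorem sum_snoc {Y : Type*} {M : Type*} [Fintype Y] [AddCommMonoid M] (t : ℕ)
    (f : (Fin (t+1) → Y) → M) :
    ∑ ys : Fin (t+1) → Y, f ys = ∑ ys : Fin t → Y, ∑ y : Y, f (Fin.snoc ys y) := by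
  rw [← (Fin.snocEquiv (fun _ => Y)).sum_comp, Fintype.sum_prod_type, Finset.sum_comm]
  rfl

theorem snoc_castLE {α : Type*} {t i : ℕ} (h : i ≤ t + 1) (hit : i ≤ t) (zs : Fin t → α) (z : α)
    (j : Fin i) : (Fin.snoc zs z : Fin (t+1) → α) (Fin.castLE h j) = zs (Fin.castLE hit j) := by
  have h2 : Fin.castLE h j = Fin.castSucc (Fin.castLE hit j) := Fin.ext rfl
  rw [h2, Fin.snoc_castSucc]

theorem jointP_snoc (t : ℕ) (w : W) (ys : Fin t → Y) (y : Y) (zs : Fin t → Z) (z : Z) :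
    jointP Qf Qb G2 u1 φ (t+1) w (Fin.snoc ys y) (Fin.snoc zs z) =
      jointP Qf Qb G2 u1 φ t w ys zs *
        (Qf (φ t (w, mem G2 u1 φ w t zs)) y * Qb y z) := by
  unfold jointP
  rw [Fin.prod_univ_castSucc, ← mul_assoc]
  congr 1
  · congr 1
    apply Finset.prod_congr rfl
    intro i _
    have hp : (fun j => (Fin.snoc zs z : Fin (t+1) → Z) (Fin.castLE (Fin.castSucc i).2.le j))
        = fun j => zs (Fin.castLE i.2.le j) :=
      funext fun j => snoc_castLE _ i.2.le zs z j
    simp only [Fin.snoc_castSucc, Fin.coe_castSucc]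
    exact congrArg (fun f : Fin (i:ℕ) → Z =>
      (Qf (φ ↑i (w, mem G2 u1 φ w ↑i f))) (ys i) * (Qb (ys i)) (zs i)) hp
  · have hp : (fun j => (Fin.snoc zs z : Fin (t+1) → Z) (Fin.castLE (Fin.last t).2.le j))
        = fun j => zs (Fin.castLE (le_refl t) j) :=
      funext fun j => snoc_castLE _ (le_refl t) zs z j
    have hz : (fun j => zs (Fin.castLE (le_refl t) j)) = zs := funext fun j => rfl
    simp only [Fin.snoc_last, Fin.val_last]
    exact congrArg (fun f : Fin t → Z => (Qf (φ t (w, mem G2 u1 φ w t f))) y * (Qb y) z)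
      (hp.trans hz)

theorem forall_snoc_agree {s m : ℕ} (hs : s ≤ m + 1) (hs' : s ≤ m) (zs : Fin s → Z)
    (zf : Fin m → Z) (z : Z) :
    (∀ j : Fin s, (Fin.snoc zf z : Fin (m+1) → Z) (Fin.castLE hs j) = zs j) ↔
      (∀ j : Fin s, zf (Fin.castLE hs' j) = zs j) := by
  constructor
  · intro hj j; rw [← snoc_castLE hs hs' zf z j]; exact hj j
  · intro hj j; rw [snoc_castLE hs hs' zf z j]; exact hj j

theorem marg (w : W) : ∀ (n s : ℕ) (hs : s ≤ n) (zs : Fin s → Z) (h : (Fin s → Y) → ℝ≥0∞),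
    (∑ ys : Fin n → Y, ∑ zf : Fin n → Z,
      if ∀ j : Fin s, zf (Fin.castLE hs j) = zs j then
        jointP Qf Qb G2 u1 φ n w ys zf * h (fun j => ys (Fin.castLE hs j)) else 0)
    = ∑ ys' : Fin s → Y, jointP Qf Qb G2 u1 φ s w ys' zs * h ys' := by
  have base : ∀ (n : ℕ) (hs : n ≤ n) (zs : Fin n → Z) (h : (Fin n → Y) → ℝ≥0∞),
      (∑ ys : Fin n → Y, ∑ zf : Fin n → Z,
        if ∀ j : Fin n, zf (Fin.castLE hs j) = zs j then
          jointP Qf Qb G2 u1 φ n w ys zf * h (fun j => ys (Fin.castLE hs j)) else 0)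
      = ∑ ys' : Fin n → Y, jointP Qf Qb G2 u1 φ n w ys' zs * h ys' := by
    intro n hs zs h
    have hc : ∀ zf : Fin n → Z, (∀ j : Fin n, zf (Fin.castLE hs j) = zs j) ↔ zf = zs := by
      intro zf
      constructor
      · intro hj; funext j; exact hj j
      · rintro rfl j; rfl
    refine Finset.sum_congr rfl fun ys _ => ?_
    have harg : (fun j => ys (Fin.castLE hs j)) = ys := rfl
    simp only [hc, harg]
    simp
  intro n
  induction n with
  | zero =>
    intro s hs zs h
    have : s = 0 := Nat.le_zero.mp hs
    subst this
    exact base 0 hs zs h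
  | succ m ih =>
    intro s hs zs h
    rcases Nat.lt_or_ge s (m+1) with hlt | hge
    · have hs' : s ≤ m := Nat.lt_succ_iff.mp hlt
      rw [sum_snoc]
      have step : ∀ y : Y, ∀ ys : Fin m → Y,
          (∑ zf : Fin (m+1) → Z,
            if ∀ j : Fin s, zf (Fin.castLE hs j) = zs j then
              jointP Qf Qb G2 u1 φ (m+1) w (Fin.snoc ys y) zf *
                h (fun j => (Fin.snoc ys y : Fin (m+1) → Y) (Fin.castLE hs j)) else 0)
          = ∑ zf : Fin m → Z,
              (if ∀ j : Fin s, zf (Fin.castLE hs' j) = zs j then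
                jointP Qf Qb G2 u1 φ m w ys zf * h (fun j => ys (Fin.castLE hs' j)) else 0) *
              ∑ z : Z, Qf (φ m (w, mem G2 u1 φ w m zf)) y * Qb y z := by
        intro y ys
        rw [sum_snoc]
        refine Finset.sum_congr rfl fun zf _ => ?_
        rw [Finset.mul_sum]
        refine Finset.sum_congr rfl fun z _ => ?_
        rw [jointP_snoc]
        have harg : (fun j => (Fin.snoc ys y : Fin (m+1) → Y) (Fin.castLE hs j))
            = fun j => ys (Fin.castLE hs' j) := funext fun j => snoc_castLE hs hs' ys y j
        simp only [forall_snoc_agree hs hs', harg]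
        by_cases hcond : ∀ j : Fin s, zf (Fin.castLE hs' j) = zs j
        · simp only [if_pos hcond]; ring
        · simp only [if_neg hcond, zero_mul]
      calc (∑ ys : Fin m → Y, ∑ y : Y, ∑ zf : Fin (m+1) → Z,
            if ∀ j : Fin s, zf (Fin.castLE hs j) = zs j then
              jointP Qf Qb G2 u1 φ (m+1) w (Fin.snoc ys y) zf *
                h (fun j => (Fin.snoc ys y : Fin (m+1) → Y) (Fin.castLE hs j)) else 0)
          = ∑ ys : Fin m → Y, ∑ zf : Fin m → Z,
              (if ∀ j : Fin s, zf (Fin.castLE hs' j) = zs j then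
                jointP Qf Qb G2 u1 φ m w ys zf * h (fun j => ys (Fin.castLE hs' j)) else 0) *
              ∑ y : Y, ∑ z : Z, Qf (φ m (w, mem G2 u1 φ w m zf)) y * Qb y z := by
            refine Finset.sum_congr rfl fun ys _ => ?_
            rw [Finset.sum_congr rfl fun y (_ : y ∈ univ) => step y ys]
            rw [Finset.sum_comm]
            refine Finset.sum_congr rfl fun zf _ => ?_
            rw [← Finset.mul_sum]
        _ = ∑ ys : Fin m → Y, ∑ zf : Fin m → Z,
              (if ∀ j : Fin s, zf (Fin.castLE hs' j) = zs j then
                jointP Qf Qb G2 u1 φ m w ys zf * h (fun j => ys (Fin.castLE hs' j)) else 0) := by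
            refine Finset.sum_congr rfl fun ys _ => Finset.sum_congr rfl fun zf _ => ?_
            have hone : (∑ y : Y, ∑ z : Z, Qf (φ m (w, mem G2 u1 φ w m zf)) y * Qb y z) = 1 := by
              have : ∀ y : Y, ∑ z : Z, Qf (φ m (w, mem G2 u1 φ w m zf)) y * Qb y z
                  = Qf (φ m (w, mem G2 u1 φ w m zf)) y := by
                intro y
                rw [← Finset.mul_sum, ← tsum_fintype (L := SummationFilter.unconditional Z), (Qb y).tsum_coe, mul_one]
              simp only [this]
              rw [← tsum_fintype (L := SummationFilter.unconditional Y)]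
              exact (Qf _).tsum_coe
            rw [hone, mul_one]
        _ = ∑ ys' : Fin s → Y, jointP Qf Qb G2 u1 φ s w ys' zs * h ys' := ih s hs' zs h
    · have : s = m + 1 := le_antisymm hs hge
      subst this
      exact base (m+1) hs zs h

theorem jointP_ne_top [Nonempty W] (t : ℕ) (w : W) (ys : Fin t → Y) (zs : Fin t → Z) :
    jointP Qf Qb G2 u1 φ t w ys zs ≠ ⊤ := by
  unfold jointP
  refine ENNReal.mul_ne_top ?_ ?_
  · simp [ENNReal.inv_ne_top, Fintype.card_ne_zero]
  · refine ne_top_of_le_ne_top ENNReal.one_ne_top (Finset.prod_le_one (fun _ _ => zero_le) ?_)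
    intro i _
    exact mul_le_one' ((Qf _).coe_le_one _) ((Qb _).coe_le_one _)

theorem probY_ne_top [Nonempty W] (t : ℕ) (ys : Fin t → Y) :
    probY Qf Qb G2 u1 φ t ys ≠ ⊤ := by
  unfold probY
  rw [← lt_top_iff_ne_top]
  refine ENNReal.sum_lt_top.mpr fun w _ => ENNReal.sum_lt_top.mpr fun zs _ => ?_
  exact lt_top_iff_ne_top.mpr (jointP_ne_top Qf Qb G2 u1 φ t w ys zs)

theorem probY_eq_sum (t : ℕ) (ys : Fin t → Y) :
    probY Qf Qb G2 u1 φ t ys = ∑ w : W, probWY Qf Qb G2 u1 φ t ys w := rfl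

theorem probWY_le_probY (t : ℕ) (ys : Fin t → Y) (w : W) :
    probWY Qf Qb G2 u1 φ t ys w ≤ probY Qf Qb G2 u1 φ t ys := by
  rw [probY_eq_sum]
  exact Finset.single_le_sum (fun _ _ => zero_le) (Finset.mem_univ w)

theorem probWUY_le_probWY (t : ℕ) (ys : Fin t → Y) (w : W) (u : U) :
    probWUY Qf Qb G2 u1 φ t ys w u ≤ probWY Qf Qb G2 u1 φ t ys w := by
  refine Finset.sum_le_sum fun zs _ => ?_
  split
  · exact le_rfl
  · exact zero_le

theorem sum_group {t : ℕ} (k : (Fin t → Z) → U) (d : (Fin t → Z) → ℝ≥0∞) (g : U → ℝ≥0∞) :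
    ∑ zf : Fin t → Z, d zf * g (k zf)
      = ∑ u : U, (∑ zf : Fin t → Z, if k zf = u then d zf else 0) * g u := by
  have : ∀ u, (∑ zf : Fin t → Z, if k zf = u then d zf else 0) * g u
      = ∑ zf : Fin t → Z, if k zf = u then d zf * g u else 0 := by
    intro u
    rw [Finset.sum_mul]
    refine Finset.sum_congr rfl fun zf _ => ?_
    by_cases h : k zf = u
    · rw [if_pos h, if_pos h]
    · rw [if_neg h, if_neg h, zero_mul]
  simp only [this]
  rw [Finset.sum_comm]
  refine Finset.sum_congr rfl fun zf _ => ?_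
  have : ∀ u, (if k zf = u then d zf * g u else 0) = if k zf = u then d zf * g (k zf) else 0 := by
    intro u
    by_cases h : k zf = u
    · rw [if_pos h, if_pos h, h]
    · rw [if_neg h, if_neg h]
  simp only [this]
  rw [Finset.sum_ite_eq]
  simp

theorem probWY_succ (t : ℕ) (ys : Fin (t+1) → Y) (w : W) :
    probWY Qf Qb G2 u1 φ (t+1) ys w
      = ∑ u : U, probWUY Qf Qb G2 u1 φ t (Fin.init ys) w u *
          Qf (φ t (w, u)) (ys (Fin.last t)) := by
  unfold probWY probWUY
  rw [sum_snoc]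
  have : ∀ zf : Fin t → Z, ∀ z : Z,
      jointP Qf Qb G2 u1 φ (t+1) w ys (Fin.snoc zf z)
        = jointP Qf Qb G2 u1 φ t w (Fin.init ys) zf *
            (Qf (φ t (w, mem G2 u1 φ w t zf)) (ys (Fin.last t)) * Qb (ys (Fin.last t)) z) := by
    intro zf z
    conv_lhs => rw [← Fin.snoc_init_self ys]
    rw [jointP_snoc]
  simp only [this]
  have hsum : ∀ zf : Fin t → Z,
      (∑ z : Z, jointP Qf Qb G2 u1 φ t w (Fin.init ys) zf *
        (Qf (φ t (w, mem G2 u1 φ w t zf)) (ys (Fin.last t)) * Qb (ys (Fin.last t)) z))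
      = jointP Qf Qb G2 u1 φ t w (Fin.init ys) zf *
          Qf (φ t (w, mem G2 u1 φ w t zf)) (ys (Fin.last t)) := by
    intro zf
    rw [← Finset.mul_sum]
    congr 1
    rw [← Finset.mul_sum, ← tsum_fintype (L := SummationFilter.unconditional Z), (Qb _).tsum_coe, mul_one]
  simp only [hsum]
  exact sum_group (fun zf => mem G2 u1 φ w t zf) _ (fun u => Qf (φ t (w, u)) (ys (Fin.last t)))

theorem probWUY_succ (t : ℕ) (ys : Fin (t+1) → Y) (w : W) (u' : U) :
    probWUY Qf Qb G2 u1 φ (t+1) ys w u'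
      = ∑ u : U, probWUY Qf Qb G2 u1 φ t (Fin.init ys) w u *
          ∑ z : Z, Qf (φ t (w, u)) (ys (Fin.last t)) * Qb (ys (Fin.last t)) z *
            (if u' = G2 u (φ t) z w then 1 else 0) := by
  unfold probWUY
  rw [sum_snoc]
  have key : ∀ zf : Fin t → Z, ∀ z : Z,
      (if mem G2 u1 φ w (t+1) (Fin.snoc zf z) = u' then
          jointP Qf Qb G2 u1 φ (t+1) w ys (Fin.snoc zf z) else 0)
        = jointP Qf Qb G2 u1 φ t w (Fin.init ys) zf *
            (Qf (φ t (w, mem G2 u1 φ w t zf)) (ys (Fin.last t)) * Qb (ys (Fin.last t)) z *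
              (if u' = G2 (mem G2 u1 φ w t zf) (φ t) z w then 1 else 0)) := by
    intro zf z
    have hmem : mem G2 u1 φ w (t+1) (Fin.snoc zf z)
        = G2 (mem G2 u1 φ w t zf) (φ t) z w := by
      simp only [mem, Fin.init_snoc, Fin.snoc_last]
    have hj : jointP Qf Qb G2 u1 φ (t+1) w ys (Fin.snoc zf z)
        = jointP Qf Qb G2 u1 φ t w (Fin.init ys) zf *
            (Qf (φ t (w, mem G2 u1 φ w t zf)) (ys (Fin.last t)) * Qb (ys (Fin.last t)) z) := by
      conv_lhs => rw [← Fin.snoc_init_self ys]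
      rw [jointP_snoc]
    rw [hmem, hj]
    by_cases hc : u' = G2 (mem G2 u1 φ w t zf) (φ t) z w
    · rw [if_pos hc.symm, if_pos hc, mul_one]
    · rw [if_neg (fun h => hc h.symm), if_neg hc, mul_zero, mul_zero]
  simp only [key]
  simp only [← Finset.mul_sum]
  exact sum_group (fun zf => mem G2 u1 φ w t zf) _
    (fun u => ∑ z : Z, Qf (φ t (w, u)) (ys (Fin.last t)) * Qb (ys (Fin.last t)) z *
      (if u' = G2 u (φ t) z w then 1 else 0))

theorem belief_inv [Nonempty W] :
    ∀ (t : ℕ) (ys : Fin t → Y), 0 < probY Qf Qb G2 u1 φ t ys →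
      ∀ w : W,
        ((beliefs Qf Qb G2 u1 φ t ys).1 w * probY Qf Qb G2 u1 φ t ys
            = probWY Qf Qb G2 u1 φ t ys w) ∧
        ∀ u : U,
          (beliefs Qf Qb G2 u1 φ t ys).1 w * (beliefs Qf Qb G2 u1 φ t ys).2 w u *
              probY Qf Qb G2 u1 φ t ys
            = probWUY Qf Qb G2 u1 φ t ys w u := by
  have cardW_ne : (Fintype.card W : ℝ≥0∞) ≠ 0 := by
    simp [Fintype.card_ne_zero]
  have cardW_ne_top : (Fintype.card W : ℝ≥0∞) ≠ ⊤ := ENNReal.natCast_ne_top _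
  intro t
  induction t with
  | zero =>
    intro ys _ w
    have hP : probY Qf Qb G2 u1 φ 0 ys = 1 := by
      unfold probY jointP
      simp
      exact ENNReal.mul_inv_cancel cardW_ne cardW_ne_top
    have hWY : probWY Qf Qb G2 u1 φ 0 ys w = (Fintype.card W : ℝ≥0∞)⁻¹ := by
      unfold probWY jointP
      simp
    have hWUY : ∀ u, probWUY Qf Qb G2 u1 φ 0 ys w u
        = if u = u1 then (Fintype.card W : ℝ≥0∞)⁻¹ else 0 := by
      intro u
      unfold probWUY jointP
      have : ∀ zs : Fin 0 → Z, mem G2 u1 φ w 0 zs = u1 := fun _ => rfl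
      simp only [this]
      by_cases h : u = u1
      · rw [if_pos h]
        simp [if_pos h.symm]
      · rw [if_neg h]
        simp [if_neg (Ne.symm h)]
    constructor
    · rw [hP, hWY, mul_one]; rfl
    · intro u
      rw [hP, hWUY u, mul_one]
      show (Fintype.card W : ℝ≥0∞)⁻¹ * (if u = u1 then 1 else 0) = _
      by_cases h : u = u1
      · rw [if_pos h, if_pos h, mul_one]
      · rw [if_neg h, if_neg h, mul_zero]
  | succ t ih =>
    intro ys hpos
    set ys₀ := Fin.init ys with hys₀
    set y := ys (Fin.last t) with hy
    set P := probY Qf Qb G2 u1 φ t ys₀ with hPdef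
    set P' := probY Qf Qb G2 u1 φ (t+1) ys with hP'def
    set π := (beliefs Qf Qb G2 u1 φ t ys₀).1 with hπ
    set η := (beliefs Qf Qb G2 u1 φ t ys₀).2 with hη
    -- positivity of P
    have hPpos : 0 < P := by
      by_contra hc
      push_neg at hc
      have hP0 : P = 0 := le_antisymm hc (zero_le)
      have hWY0 : ∀ w', probWY Qf Qb G2 u1 φ t ys₀ w' = 0 := fun w' =>
        le_antisymm (hP0 ▸ probWY_le_probY Qf Qb G2 u1 φ t ys₀ w') (zero_le)
      have hWUY0 : ∀ w' u, probWUY Qf Qb G2 u1 φ t ys₀ w' u = 0 := fun w' u =>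
        le_antisymm ((hWY0 w') ▸ probWUY_le_probWY Qf Qb G2 u1 φ t ys₀ w' u) (zero_le)
      have : P' = 0 := by
        rw [hP'def, probY_eq_sum]
        refine Finset.sum_eq_zero fun w' _ => ?_
        rw [probWY_succ]
        exact Finset.sum_eq_zero fun u _ => by rw [hWUY0 w' u, zero_mul]
      exact absurd this (ne_of_gt hpos)
    have hPtop : P ≠ ⊤ := probY_ne_top Qf Qb G2 u1 φ t ys₀
    have hP'top : P' ≠ ⊤ := probY_ne_top Qf Qb G2 u1 φ (t+1) ys
    have IH := ih ys₀ hPpos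
    -- key quantities
    set S : W → ℝ≥0∞ := fun w' => ∑ u : U, η w' u * Qf (φ t (w', u)) y with hS
    set Dden : ℝ≥0∞ := ∑ w' : W, π w' * S w' with hDden
    have key1 : ∀ w', π w' * S w' * P = probWY Qf Qb G2 u1 φ (t+1) ys w' := by
      intro w'
      rw [probWY_succ]
      rw [hS]
      simp only
      rw [Finset.mul_sum, Finset.sum_mul]
      refine Finset.sum_congr rfl fun u _ => ?_
      rw [← (IH w').2 u]
      ring
    have key2 : Dden * P = P' := by
      rw [hDden, Finset.sum_mul, hP'def, probY_eq_sum]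
      exact Finset.sum_congr rfl fun w' _ => key1 w'
    have hD0 : Dden ≠ 0 := by
      intro h
      rw [h, zero_mul] at key2
      exact absurd key2.symm (ne_of_gt hpos)
    have hDtop : Dden ≠ ⊤ := by
      intro h
      rw [h] at key2
      rw [ENNReal.top_mul (ne_of_gt hPpos)] at key2
      exact hP'top key2.symm
    -- unfold beliefs at t+1
    have hb : beliefs Qf Qb G2 u1 φ (t+1) ys
        = Fb Qf Qb G2 (beliefs Qf Qb G2 u1 φ t ys₀) (φ t) y := rfl
    have hb1 : ∀ w', (beliefs Qf Qb G2 u1 φ (t+1) ys).1 w' = π w' * S w' / Dden := by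
      intro w'
      rw [hb]
      show F1 Qf (beliefs Qf Qb G2 u1 φ t ys₀) (φ t) y w' = _
      unfold F1
      rfl
    have hb2 : ∀ w' u', (beliefs Qf Qb G2 u1 φ (t+1) ys).2 w' u'
        = (∑ u : U, ∑ z : Z, η w' u * Qf (φ t (w', u)) y * Qb y z *
            (if u' = G2 u (φ t) z w' then 1 else 0)) / S w' := by
      intro w' u'
      rw [hb]
      show F2 Qf Qb G2 (beliefs Qf Qb G2 u1 φ t ys₀) (φ t) y w' u' = _
      unfold F2
      rfl
    have goal1 : ∀ w', (beliefs Qf Qb G2 u1 φ (t+1) ys).1 w' * P'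
        = probWY Qf Qb G2 u1 φ (t+1) ys w' := by
      intro w'
      rw [hb1, ← key1 w', ← key2, div_eq_mul_inv]
      calc π w' * S w' * Dden⁻¹ * (Dden * P)
          = π w' * S w' * P * (Dden⁻¹ * Dden) := by ring
        _ = π w' * S w' * P := by rw [ENNReal.inv_mul_cancel hD0 hDtop, mul_one]
    intro w'
    refine ⟨goal1 w', fun u' => ?_⟩
    rw [hb1, hb2]
    set Num : ℝ≥0∞ := ∑ u : U, ∑ z : Z, η w' u * Qf (φ t (w', u)) y * Qb y z *
        (if u' = G2 u (φ t) z w' then 1 else 0) with hNum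
    have keyNum : π w' * Num * P = probWUY Qf Qb G2 u1 φ (t+1) ys w' u' := by
      rw [probWUY_succ, hNum]
      rw [Finset.mul_sum, Finset.sum_mul]
      refine Finset.sum_congr rfl fun u _ => ?_
      rw [← (IH w').2 u, Finset.mul_sum, Finset.mul_sum, Finset.sum_mul]
      refine Finset.sum_congr rfl fun z _ => ?_
      ring
    by_cases hx : π w' * S w' = 0
    · rw [hx, ENNReal.zero_div, zero_mul, zero_mul]
      have h1 : probWY Qf Qb G2 u1 φ (t+1) ys w' = 0 := by
        rw [← key1 w', hx, zero_mul]
      exact (le_antisymm (h1 ▸ probWUY_le_probWY Qf Qb G2 u1 φ (t+1) ys w' u')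
        (zero_le)).symm
    · have hπ0 : π w' ≠ 0 := fun h => hx (by rw [h, zero_mul])
      have hS0 : S w' ≠ 0 := fun h => hx (by rw [h, mul_zero])
      have hxD : π w' * S w' ≤ Dden := Finset.single_le_sum
        (f := fun w'' => π w'' * S w'') (fun _ _ => zero_le) (Finset.mem_univ w')
      have hStop : S w' ≠ ⊤ := by
        intro h
        apply hDtop
        have : π w' * S w' = ⊤ := by rw [h, ENNReal.mul_top hπ0]
        exact top_le_iff.mp (this ▸ hxD)
      rw [← keyNum, ← key2, div_eq_mul_inv, div_eq_mul_inv]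
      calc π w' * S w' * Dden⁻¹ * (Num * (S w')⁻¹) * (Dden * P)
          = π w' * Num * P * (S w' * (S w')⁻¹) * (Dden⁻¹ * Dden) := by ring
        _ = π w' * Num * P := by
            rw [ENNReal.mul_inv_cancel hS0 hStop, ENNReal.inv_mul_cancel hD0 hDtop,
              mul_one, mul_one]

theorem ite_and_right {A B : Prop} (x : ℝ≥0∞) :
    (if A ∧ B then x else 0) = if B then (if A then x else 0) else 0 := by
  by_cases hA : A <;> by_cases hB : B <;> simp [hA, hB]

theorem ite_and_mul_ind {A B : Prop} (x : ℝ≥0∞) :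
    (if A ∧ B then x else 0) = if A then x * (if B then 1 else 0) else 0 := by
  by_cases hA : A <;> by_cases hB : B <;> simp [hA, hB]

theorem tsum_push {A B : Type*} [Fintype A] (F : A → ℝ≥0∞) (bel : A → B) (g : B → ℝ≥0∞)
    (d : ∀ a b, Decidable (bel a = b)) :
    ∑' b : B, (∑ a : A, @ite _ (bel a = b) (d a b) (F a) 0) * g b
      = ∑ a : A, F a * g (bel a) := by
  have h1 : ∀ b, (∑ a : A, @ite _ (bel a = b) (d a b) (F a) 0) * g b
      = ∑ a : A, @ite _ (bel a = b) (d a b) (F a * g (bel a)) 0 := by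
    intro b; rw [Finset.sum_mul]; refine Finset.sum_congr rfl fun a _ => ?_
    by_cases h : bel a = b
    · rw [if_pos h, if_pos h, h]
    · rw [if_neg h, if_neg h, zero_mul]
  simp only [h1]
  rw [Summable.tsum_finsetSum (fun a _ => ENNReal.summable)]
  refine Finset.sum_congr rfl fun a _ => ?_
  rw [tsum_eq_single (bel a) (fun b' hb' => if_neg (fun h => hb' h.symm)), if_pos rfl]

theorem ne_top_sum_sum {A B : Type*} [Fintype A] [Fintype B] (f : A → B → ℝ≥0∞)
    (h : ∀ a b, f a b ≠ ⊤) : (∑ a : A, ∑ b : B, f a b) ≠ ⊤ := by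
  rw [← lt_top_iff_ne_top]
  exact ENNReal.sum_lt_top.mpr fun a _ => ENNReal.sum_lt_top.mpr fun b _ =>
    lt_top_iff_ne_top.mpr (h a b)

theorem ite_and_left {A B : Prop} (x : ℝ≥0∞) :
    (if A ∧ B then x else 0) = if A then (if B then x else 0) else 0 := by
  by_cases hA : A <;> by_cases hB : B <;> simp [hA, hB]

theorem ite_ne_top {A : Prop} {d : Decidable A} {x : ℝ≥0∞} (hx : x ≠ ⊤) :
    (@ite _ A d x 0) ≠ ⊤ := by
  split
  · exact hx
  · exact ENNReal.zero_ne_top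

theorem P1 [Nonempty W] (n : ℕ) (w : W) :
    ∀ (k s : ℕ), s + k = n → ∀ (hs : s ≤ n) (zs : Fin s → Z),
    0 < (∑ ys : Fin n → Y, ∑ zf : Fin n → Z,
          if ∀ j : Fin s, zf (Fin.castLE hs j) = zs j then
            jointP Qf Qb G2 u1 φ n w ys zf else 0) →
    (∑ ys : Fin n → Y, ∑ zf : Fin n → Z,
        if ∀ j : Fin s, zf (Fin.castLE hs j) = zs j then
          jointP Qf Qb G2 u1 φ n w ys zf *
            (1 - univ.sup fun w' : W => (beliefs Qf Qb G2 u1 φ n ys).1 w')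
        else 0) /
      (∑ ys : Fin n → Y, ∑ zf : Fin n → Z,
        if ∀ j : Fin s, zf (Fin.castLE hs j) = zs j then
          jointP Qf Qb G2 u1 φ n w ys zf else 0) =
    Jk Qf Qb G2 φ n k
      (fun b =>
        (∑ ys : Fin n → Y, ∑ zf : Fin n → Z,
          if (∀ j : Fin s, zf (Fin.castLE hs j) = zs j) ∧
              beliefs Qf Qb G2 u1 φ s (fun j => ys (Fin.castLE hs j)) = b then
            jointP Qf Qb G2 u1 φ n w ys zf else 0) /
        (∑ ys : Fin n → Y, ∑ zf : Fin n → Z,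
          if ∀ j : Fin s, zf (Fin.castLE hs j) = zs j then
            jointP Qf Qb G2 u1 φ n w ys zf else 0))
      (mem G2 u1 φ w s zs) w := by
  intro k
  induction k with
  | zero =>
    intro s hks hs zs hpos
    obtain rfl : n = s := by omega
    set D := ∑ ys : Fin n → Y, ∑ zf : Fin n → Z,
      if ∀ j : Fin n, zf (Fin.castLE hs j) = zs j then
        jointP Qf Qb G2 u1 φ n w ys zf else 0 with hD
    simp only [Jk]
    have hNb : ∀ b : Belief W U,
        (∑ ys : Fin n → Y, ∑ zf : Fin n → Z,
          if (∀ j : Fin n, zf (Fin.castLE hs j) = zs j) ∧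
              beliefs Qf Qb G2 u1 φ n (fun j => ys (Fin.castLE hs j)) = b then
            jointP Qf Qb G2 u1 φ n w ys zf else 0)
        = ∑ a : (Fin n → Y) × (Fin n → Z),
            if beliefs Qf Qb G2 u1 φ n (fun j => a.1 (Fin.castLE hs j)) = b then
              (if ∀ j : Fin n, a.2 (Fin.castLE hs j) = zs j then
                jointP Qf Qb G2 u1 φ n w a.1 a.2 else 0) else 0 := by
      intro b
      rw [Fintype.sum_prod_type]
      refine Finset.sum_congr rfl fun ys _ => Finset.sum_congr rfl fun zf _ => ?_
      by_cases hA : ∀ j : Fin n, zf (Fin.castLE hs j) = zs j <;>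
        by_cases hB : beliefs Qf Qb G2 u1 φ n (fun j => ys (Fin.castLE hs j)) = b
      · rw [if_pos ⟨hA, hB⟩, if_pos hB, if_pos hA]
      · rw [if_neg (fun h => hB h.2), if_neg hB]
      · rw [if_neg (fun h => hA h.1), if_pos hB, if_neg hA]
      · rw [if_neg (fun h => hA h.1), if_neg hB]
    calc (∑ ys : Fin n → Y, ∑ zf : Fin n → Z,
            if ∀ j : Fin n, zf (Fin.castLE hs j) = zs j then
              jointP Qf Qb G2 u1 φ n w ys zf *
                (1 - univ.sup fun w' : W => (beliefs Qf Qb G2 u1 φ n ys).1 w')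
            else 0) / D
        = ∑ a : (Fin n → Y) × (Fin n → Z),
            (if ∀ j : Fin n, a.2 (Fin.castLE hs j) = zs j then
              jointP Qf Qb G2 u1 φ n w a.1 a.2 else 0) *
            (D⁻¹ * (1 - univ.sup fun w' : W =>
              (beliefs Qf Qb G2 u1 φ n (fun j => a.1 (Fin.castLE hs j))).1 w')) := by
          rw [div_eq_mul_inv, Fintype.sum_prod_type, Finset.sum_mul]
          refine Finset.sum_congr rfl fun ys _ => ?_
          rw [Finset.sum_mul]
          refine Finset.sum_congr rfl fun zf _ => ?_
          have harg : (fun j => ys (Fin.castLE hs j)) = ys := rfl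
          rw [harg]
          by_cases hc : ∀ j : Fin n, zf (Fin.castLE hs j) = zs j
          · rw [if_pos hc, if_pos hc]; ring
          · rw [if_neg hc, if_neg hc, zero_mul, zero_mul]
      _ = ∑' p : Belief W U,
            (∑ a : (Fin n → Y) × (Fin n → Z),
              if beliefs Qf Qb G2 u1 φ n (fun j => a.1 (Fin.castLE hs j)) = p then
                (if ∀ j : Fin n, a.2 (Fin.castLE hs j) = zs j then
                  jointP Qf Qb G2 u1 φ n w a.1 a.2 else 0) else 0) *
            (D⁻¹ * (1 - univ.sup fun w' : W => p.1 w')) := by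
          rw [tsum_push]
      _ = ∑' p : Belief W U,
            ((∑ ys : Fin n → Y, ∑ zf : Fin n → Z,
              if (∀ j : Fin n, zf (Fin.castLE hs j) = zs j) ∧
                  beliefs Qf Qb G2 u1 φ n (fun j => ys (Fin.castLE hs j)) = p then
                jointP Qf Qb G2 u1 φ n w ys zf else 0) / D) *
            (1 - univ.sup fun w' : W => p.1 w') := by
          refine tsum_congr fun p => ?_
          rw [hNb p, div_eq_mul_inv]
          ring
  | succ k ihk =>
    intro s hks hs zs hpos
    have hs1 : s + 1 ≤ n := by omega
    have hns : n - (k + 1) = s := by omega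
    set u := mem G2 u1 φ w s zs with hu
    set D := ∑ ys : Fin n → Y, ∑ zf : Fin n → Z,
      if ∀ j : Fin s, zf (Fin.castLE hs j) = zs j then
        jointP Qf Qb G2 u1 φ n w ys zf else 0 with hD
    have hD0 : D ≠ 0 := ne_of_gt hpos
    have hDtop : D ≠ ⊤ := ne_top_sum_sum _ fun ys zf =>
      ite_ne_top (jointP_ne_top Qf Qb G2 u1 φ n w ys zf)
    -- condition-splitting
    have hiff : ∀ (z : Z) (zf : Fin n → Z),
        (∀ j : Fin (s+1), zf (Fin.castLE hs1 j) = (Fin.snoc zs z : Fin (s+1) → Z) j) ↔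
          ((∀ j : Fin s, zf (Fin.castLE hs j) = zs j) ∧
            zf (Fin.castLE hs1 (Fin.last s)) = z) := by
      intro z zf
      constructor
      · intro hj
        refine ⟨fun j => ?_, ?_⟩
        · have h1 := hj (Fin.castSucc j)
          rw [Fin.snoc_castSucc] at h1
          rwa [show Fin.castLE hs1 (Fin.castSucc j) = Fin.castLE hs j from Fin.ext rfl] at h1
        · have h2 := hj (Fin.last s)
          rwa [Fin.snoc_last] at h2
      · rintro ⟨h1, h2⟩ j
        induction j using Fin.lastCases with
        | last => rw [Fin.snoc_last]; exact h2
        | cast j =>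
          rw [Fin.snoc_castSucc,
            show Fin.castLE hs1 (Fin.castSucc j) = Fin.castLE hs j from Fin.ext rfl]
          exact h1 j
    have hsplit : ∀ (f : (Fin n → Y) → (Fin n → Z) → ℝ≥0∞),
        (∑ ys : Fin n → Y, ∑ zf : Fin n → Z,
          if ∀ j : Fin s, zf (Fin.castLE hs j) = zs j then f ys zf else 0)
        = ∑ z : Z, ∑ ys : Fin n → Y, ∑ zf : Fin n → Z,
            if ∀ j : Fin (s+1), zf (Fin.castLE hs1 j) = (Fin.snoc zs z : Fin (s+1) → Z) j then f ys zf else 0 := by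
      intro f
      have hper : ∀ (ys : Fin n → Y) (zf : Fin n → Z),
          (if ∀ j : Fin s, zf (Fin.castLE hs j) = zs j then f ys zf else 0)
          = ∑ z : Z, if ∀ j : Fin (s+1), zf (Fin.castLE hs1 j) = (Fin.snoc zs z : Fin (s+1) → Z) j then
              f ys zf else 0 := by
        intro ys zf
        have : ∀ z : Z, (if ∀ j : Fin (s+1), zf (Fin.castLE hs1 j) = (Fin.snoc zs z : Fin (s+1) → Z) j then
            f ys zf else 0)
            = if (∀ j : Fin s, zf (Fin.castLE hs j) = zs j) then
                (if zf (Fin.castLE hs1 (Fin.last s)) = z then f ys zf else 0) else 0 := by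
          intro z
          by_cases h1 : ∀ j : Fin s, zf (Fin.castLE hs j) = zs j
          · by_cases h2 : zf (Fin.castLE hs1 (Fin.last s)) = z
            · rw [if_pos ((hiff z zf).mpr ⟨h1, h2⟩), if_pos h1, if_pos h2]
            · rw [if_neg (fun h => h2 ((hiff z zf).mp h).2), if_pos h1, if_neg h2]
          · rw [if_neg (fun h => h1 ((hiff z zf).mp h).1), if_neg h1]
        simp only [this]
        by_cases hc : ∀ j : Fin s, zf (Fin.castLE hs j) = zs j
        · simp only [if_pos hc]
          rw [Finset.sum_ite_eq univ (zf (Fin.castLE hs1 (Fin.last s))) fun _ => f ys zf]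
          rw [if_pos (Finset.mem_univ _)]
        · simp only [if_neg hc, Finset.sum_const_zero]
      simp only [hper]
      rw [Finset.sum_congr rfl fun ys (_ : ys ∈ univ) => Finset.sum_comm]
      rw [Finset.sum_comm]
    -- marginal identities
    have margD : D = ∑ ys' : Fin s → Y, jointP Qf Qb G2 u1 φ s w ys' zs := by
      rw [hD]
      have h1 := marg Qf Qb G2 u1 φ w n s hs zs (fun _ => 1)
      simpa only [mul_one] using h1
    have hczle : ∀ z : Z, (∑ y : Y, Qf (φ s (w, u)) y * Qb y z) ≤ 1 := by
      intro z
      calc ∑ y : Y, Qf (φ s (w, u)) y * Qb y z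
          ≤ ∑ y : Y, Qf (φ s (w, u)) y := Finset.sum_le_sum fun y _ =>
            mul_le_of_le_one_right (zero_le) ((Qb y).coe_le_one z)
        _ = 1 := by rw [← tsum_fintype (L := SummationFilter.unconditional Y)]; exact (Qf _).tsum_coe
    have hcztop : ∀ z : Z, (∑ y : Y, Qf (φ s (w, u)) y * Qb y z) ≠ ⊤ := fun z =>
      ne_top_of_le_ne_top ENNReal.one_ne_top (hczle z)
    have hmem1 : ∀ z : Z, mem G2 u1 φ w (s+1) (Fin.snoc zs z) = G2 u (φ s) z w := by
      intro z
      simp only [mem, Fin.init_snoc, Fin.snoc_last, hu]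
    have hbel : ∀ (ys' : Fin s → Y) (y : Y),
        beliefs Qf Qb G2 u1 φ (s+1) (Fin.snoc ys' y)
          = Fb Qf Qb G2 (beliefs Qf Qb G2 u1 φ s ys') (φ s) y := by
      intro ys' y
      simp only [beliefs, Fin.init_snoc, Fin.snoc_last]
    have hD'z : ∀ z : Z,
        (∑ ys : Fin n → Y, ∑ zf : Fin n → Z,
          if ∀ j : Fin (s+1), zf (Fin.castLE hs1 j) = (Fin.snoc zs z : Fin (s+1) → Z) j then
            jointP Qf Qb G2 u1 φ n w ys zf else 0)
        = D * ∑ y : Y, Qf (φ s (w, u)) y * Qb y z := by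
      intro z
      have h1 := marg Qf Qb G2 u1 φ w n (s+1) hs1 (Fin.snoc zs z) (fun _ => 1)
      simp only [mul_one] at h1
      rw [h1, sum_snoc]
      have h2 : ∀ (ys' : Fin s → Y) (y : Y),
          jointP Qf Qb G2 u1 φ (s+1) w (Fin.snoc ys' y) (Fin.snoc zs z)
            = jointP Qf Qb G2 u1 φ s w ys' zs * (Qf (φ s (w, u)) y * Qb y z) := by
        intro ys' y
        rw [jointP_snoc, ← hu]
      simp only [h2]
      rw [margD, Finset.sum_mul]
      exact Finset.sum_congr rfl fun ys' _ => by rw [← Finset.mul_sum]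
    -- conditional-belief evolution
    have hNbp : ∀ p : Belief W U,
        (∑ ys : Fin n → Y, ∑ zf : Fin n → Z,
          if (∀ j : Fin s, zf (Fin.castLE hs j) = zs j) ∧
              beliefs Qf Qb G2 u1 φ s (fun j => ys (Fin.castLE hs j)) = p then
            jointP Qf Qb G2 u1 φ n w ys zf else 0)
        = ∑ a : (Fin n → Y) × (Fin n → Z),
            if beliefs Qf Qb G2 u1 φ s (fun j => a.1 (Fin.castLE hs j)) = p then
              (if ∀ j : Fin s, a.2 (Fin.castLE hs j) = zs j then
                jointP Qf Qb G2 u1 φ n w a.1 a.2 else 0) else 0 := by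
      intro p
      rw [Fintype.sum_prod_type]
      refine Finset.sum_congr rfl fun ys _ => Finset.sum_congr rfl fun zf _ => ?_
      by_cases hA : ∀ j : Fin s, zf (Fin.castLE hs j) = zs j <;>
        by_cases hB : beliefs Qf Qb G2 u1 φ s (fun j => ys (Fin.castLE hs j)) = p
      · rw [if_pos ⟨hA, hB⟩, if_pos hB, if_pos hA]
      · rw [if_neg (fun h => hB h.2), if_neg hB]
      · rw [if_neg (fun h => hA h.1), if_pos hB, if_neg hA]
      · rw [if_neg (fun h => hA h.1), if_neg hB]
    have hMnum : ∀ (z : Z) (b : Belief W U),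
        (∑' p : Belief W U,
          ((∑ ys : Fin n → Y, ∑ zf : Fin n → Z,
            if (∀ j : Fin s, zf (Fin.castLE hs j) = zs j) ∧
                beliefs Qf Qb G2 u1 φ s (fun j => ys (Fin.castLE hs j)) = p then
              jointP Qf Qb G2 u1 φ n w ys zf else 0) / D) *
          ∑ y : Y, Qf (φ s (w, u)) y * Qb y z *
            (if b = Fb Qf Qb G2 p (φ s) y then 1 else 0))
        = (∑ ys' : Fin s → Y, jointP Qf Qb G2 u1 φ s w ys' zs *
            ∑ y : Y, Qf (φ s (w, u)) y * Qb y z *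
              (if b = Fb Qf Qb G2 (beliefs Qf Qb G2 u1 φ s ys') (φ s) y then 1 else 0)) * D⁻¹ := by
      intro z b
      calc (∑' p : Belief W U,
          ((∑ ys : Fin n → Y, ∑ zf : Fin n → Z,
            if (∀ j : Fin s, zf (Fin.castLE hs j) = zs j) ∧
                beliefs Qf Qb G2 u1 φ s (fun j => ys (Fin.castLE hs j)) = p then
              jointP Qf Qb G2 u1 φ n w ys zf else 0) / D) *
          ∑ y : Y, Qf (φ s (w, u)) y * Qb y z *
            (if b = Fb Qf Qb G2 p (φ s) y then 1 else 0))
          = ∑' p : Belief W U,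
            (∑ a : (Fin n → Y) × (Fin n → Z),
              if beliefs Qf Qb G2 u1 φ s (fun j => a.1 (Fin.castLE hs j)) = p then
                (if ∀ j : Fin s, a.2 (Fin.castLE hs j) = zs j then
                  jointP Qf Qb G2 u1 φ n w a.1 a.2 else 0) else 0) *
            (D⁻¹ * ∑ y : Y, Qf (φ s (w, u)) y * Qb y z *
              (if b = Fb Qf Qb G2 p (φ s) y then 1 else 0)) := by
            refine tsum_congr fun p => ?_
            rw [hNbp p, div_eq_mul_inv]
            ring
        _ = ∑ a : (Fin n → Y) × (Fin n → Z),
            (if ∀ j : Fin s, a.2 (Fin.castLE hs j) = zs j then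
              jointP Qf Qb G2 u1 φ n w a.1 a.2 else 0) *
            (D⁻¹ * ∑ y : Y, Qf (φ s (w, u)) y * Qb y z *
              (if b = Fb Qf Qb G2 (beliefs Qf Qb G2 u1 φ s (fun j => a.1 (Fin.castLE hs j)))
                  (φ s) y then 1 else 0)) := by
            rw [tsum_push]
        _ = (∑ ys : Fin n → Y, ∑ zf : Fin n → Z,
              if ∀ j : Fin s, zf (Fin.castLE hs j) = zs j then
                jointP Qf Qb G2 u1 φ n w ys zf *
                  (∑ y : Y, Qf (φ s (w, u)) y * Qb y z *
                    (if b = Fb Qf Qb G2 (beliefs Qf Qb G2 u1 φ s (fun j => ys (Fin.castLE hs j)))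
                        (φ s) y then 1 else 0)) else 0) * D⁻¹ := by
            rw [Fintype.sum_prod_type, Finset.sum_mul]
            refine Finset.sum_congr rfl fun ys _ => ?_
            rw [Finset.sum_mul]
            refine Finset.sum_congr rfl fun zf _ => ?_
            by_cases hc : ∀ j : Fin s, zf (Fin.castLE hs j) = zs j
            · rw [if_pos hc, if_pos hc]; ring
            · rw [if_neg hc, if_neg hc]
              ring
        _ = (∑ ys' : Fin s → Y, jointP Qf Qb G2 u1 φ s w ys' zs *
            ∑ y : Y, Qf (φ s (w, u)) y * Qb y z *
              (if b = Fb Qf Qb G2 (beliefs Qf Qb G2 u1 φ s ys') (φ s) y then 1 else 0)) * D⁻¹ := by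
            rw [marg Qf Qb G2 u1 φ w n s hs zs
              (fun ys' => ∑ y : Y, Qf (φ s (w, u)) y * Qb y z *
                (if b = Fb Qf Qb G2 (beliefs Qf Qb G2 u1 φ s ys') (φ s) y then 1 else 0))]
    have hMN' : ∀ (z : Z) (b : Belief W U),
        (∑ ys : Fin n → Y, ∑ zf : Fin n → Z,
          if (∀ j : Fin (s+1), zf (Fin.castLE hs1 j) = (Fin.snoc zs z : Fin (s+1) → Z) j) ∧
              beliefs Qf Qb G2 u1 φ (s+1) (fun j => ys (Fin.castLE hs1 j)) = b then
            jointP Qf Qb G2 u1 φ n w ys zf else 0)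
        = ∑ ys' : Fin s → Y, jointP Qf Qb G2 u1 φ s w ys' zs *
            ∑ y : Y, Qf (φ s (w, u)) y * Qb y z *
              (if b = Fb Qf Qb G2 (beliefs Qf Qb G2 u1 φ s ys') (φ s) y then 1 else 0) := by
      intro z b
      calc (∑ ys : Fin n → Y, ∑ zf : Fin n → Z,
          if (∀ j : Fin (s+1), zf (Fin.castLE hs1 j) = (Fin.snoc zs z : Fin (s+1) → Z) j) ∧
              beliefs Qf Qb G2 u1 φ (s+1) (fun j => ys (Fin.castLE hs1 j)) = b then
            jointP Qf Qb G2 u1 φ n w ys zf else 0)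
          = ∑ ys : Fin n → Y, ∑ zf : Fin n → Z,
            if ∀ j : Fin (s+1), zf (Fin.castLE hs1 j) = (Fin.snoc zs z : Fin (s+1) → Z) j then
              jointP Qf Qb G2 u1 φ n w ys zf *
                (if beliefs Qf Qb G2 u1 φ (s+1) (fun j => ys (Fin.castLE hs1 j)) = b then 1
                  else 0) else 0 := by
            refine Finset.sum_congr rfl fun ys _ => Finset.sum_congr rfl fun zf _ => ?_
            by_cases hA : ∀ j : Fin (s+1), zf (Fin.castLE hs1 j) = (Fin.snoc zs z : Fin (s+1) → Z) j <;>
              by_cases hB : beliefs Qf Qb G2 u1 φ (s+1) (fun j => ys (Fin.castLE hs1 j)) = b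
            · rw [if_pos ⟨hA, hB⟩, if_pos hA, if_pos hB, mul_one]
            · rw [if_neg (fun h => hB h.2), if_pos hA, if_neg hB, mul_zero]
            · rw [if_neg (fun h => hA h.1), if_neg hA]
            · rw [if_neg (fun h => hA h.1), if_neg hA]
        _ = ∑ ys'' : Fin (s+1) → Y, jointP Qf Qb G2 u1 φ (s+1) w ys'' (Fin.snoc zs z) *
              (if beliefs Qf Qb G2 u1 φ (s+1) ys'' = b then 1 else 0) :=
            marg Qf Qb G2 u1 φ w n (s+1) hs1 (Fin.snoc zs z)
              (fun ys'' => if beliefs Qf Qb G2 u1 φ (s+1) ys'' = b then 1 else 0)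
        _ = ∑ ys' : Fin s → Y, ∑ y : Y,
              (jointP Qf Qb G2 u1 φ s w ys' zs * (Qf (φ s (w, u)) y * Qb y z)) *
              (if Fb Qf Qb G2 (beliefs Qf Qb G2 u1 φ s ys') (φ s) y = b then 1 else 0) := by
            rw [sum_snoc]
            refine Finset.sum_congr rfl fun ys' _ => Finset.sum_congr rfl fun y _ => ?_
            rw [jointP_snoc, ← hu, hbel]
        _ = ∑ ys' : Fin s → Y, jointP Qf Qb G2 u1 φ s w ys' zs *
              ∑ y : Y, Qf (φ s (w, u)) y * Qb y z *
                (if b = Fb Qf Qb G2 (beliefs Qf Qb G2 u1 φ s ys') (φ s) y then 1 else 0) := by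
            refine Finset.sum_congr rfl fun ys' _ => ?_
            rw [Finset.mul_sum]
            refine Finset.sum_congr rfl fun y _ => ?_
            by_cases hc : Fb Qf Qb G2 (beliefs Qf Qb G2 u1 φ s ys') (φ s) y = b
            · rw [if_pos hc, if_pos hc.symm]; ring
            · rw [if_neg hc, if_neg (fun h => hc h.symm)]
              ring
    have hG1 : ∀ z : Z, (∑ y : Y, Qf (φ s (w, u)) y * Qb y z) ≠ 0 →
        G1 Qf Qb G2
          (fun b => (∑ ys : Fin n → Y, ∑ zf : Fin n → Z,
              if (∀ j : Fin s, zf (Fin.castLE hs j) = zs j) ∧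
                  beliefs Qf Qb G2 u1 φ s (fun j => ys (Fin.castLE hs j)) = b then
                jointP Qf Qb G2 u1 φ n w ys zf else 0) / D)
          (φ s) z u w
        = fun b => (∑ ys : Fin n → Y, ∑ zf : Fin n → Z,
              if (∀ j : Fin (s+1), zf (Fin.castLE hs1 j) = (Fin.snoc zs z : Fin (s+1) → Z) j) ∧
                  beliefs Qf Qb G2 u1 φ (s+1) (fun j => ys (Fin.castLE hs1 j)) = b then
                jointP Qf Qb G2 u1 φ n w ys zf else 0) /
            (∑ ys : Fin n → Y, ∑ zf : Fin n → Z,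
              if ∀ j : Fin (s+1), zf (Fin.castLE hs1 j) = (Fin.snoc zs z : Fin (s+1) → Z) j then
                jointP Qf Qb G2 u1 φ n w ys zf else 0) := by
      intro z hcz
      funext b
      simp only [G1]
      rw [hMnum z b, hMN' z b, hD'z z]
      rw [div_eq_mul_inv, div_eq_mul_inv,
        ENNReal.mul_inv (Or.inl hD0) (Or.inl hDtop)]
      ring
    -- assemble
    simp only [Jk, hns]
    conv_rhs => rw [Finset.sum_comm]
    conv_lhs =>
      rw [hsplit (fun ys zf => jointP Qf Qb G2 u1 φ n w ys zf *
        (1 - univ.sup fun w' : W => (beliefs Qf Qb G2 u1 φ n ys).1 w'))]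
      rw [div_eq_mul_inv, Finset.sum_mul]
    refine Finset.sum_congr rfl fun z _ => ?_
    rw [← Finset.sum_mul]
    by_cases hcz : (∑ y : Y, Qf (φ s (w, u)) y * Qb y z) = 0
    · rw [hcz, zero_mul]
      have hle : (∑ ys : Fin n → Y, ∑ zf : Fin n → Z,
          if ∀ j : Fin (s+1), zf (Fin.castLE hs1 j) = (Fin.snoc zs z : Fin (s+1) → Z) j then
            jointP Qf Qb G2 u1 φ n w ys zf *
              (1 - univ.sup fun w' : W => (beliefs Qf Qb G2 u1 φ n ys).1 w') else 0)
          ≤ ∑ ys : Fin n → Y, ∑ zf : Fin n → Z,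
            if ∀ j : Fin (s+1), zf (Fin.castLE hs1 j) = (Fin.snoc zs z : Fin (s+1) → Z) j then
              jointP Qf Qb G2 u1 φ n w ys zf else 0 := by
        refine Finset.sum_le_sum fun ys _ => Finset.sum_le_sum fun zf _ => ?_
        split
        · exact mul_le_of_le_one_right (zero_le) tsub_le_self
        · exact le_rfl
      rw [hD'z z, hcz, mul_zero] at hle
      rw [le_antisymm hle (zero_le), zero_mul]
    · have hpos' : 0 < ∑ ys : Fin n → Y, ∑ zf : Fin n → Z,
          if ∀ j : Fin (s+1), zf (Fin.castLE hs1 j) = (Fin.snoc zs z : Fin (s+1) → Z) j then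
            jointP Qf Qb G2 u1 φ n w ys zf else 0 := by
        rw [hD'z z]
        exact ENNReal.mul_pos hD0 hcz
      have ih' := ihk (s+1) (by omega) hs1 (Fin.snoc zs z) hpos'
      rw [hG1 z hcz, ← hmem1 z, ← ih', hD'z z, div_eq_mul_inv,
        ENNReal.mul_inv (Or.inl hD0) (Or.inl hDtop)]
      have hfin : ∀ N : ℝ≥0∞, (∑ y : Y, Qf (φ s (w, u)) y * Qb y z) *
          (N * (D⁻¹ * (∑ y : Y, Qf (φ s (w, u)) y * Qb y z)⁻¹))
          = N * D⁻¹ * ((∑ y : Y, Qf (φ s (w, u)) y * Qb y z) *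
            (∑ y : Y, Qf (φ s (w, u)) y * Qb y z)⁻¹) := fun N => by ring
      rw [hfin, ENNReal.mul_inv_cancel hcz (hcztop z), mul_one]

end Aux

/-- **Policy evaluation via the sender's belief state** (Statement 7).  For each time
`t = s + 1` (so `0 ≤ s ≤ n`), each message `w` and each feedback history
`zs = z_{1:s}` of positive probability, the conditional expected terminal error
`E[1 - max_w̃ Π_n(w̃) | W = w, Z_{1:s} = zs]` equals `J_{s+1}(σ_{s+1}, u_{s+1}, w)`,
where `σ_{s+1}` is the conditional law of `(Π_s, H_s)` given `(W = w, Z_{1:s} = zs)`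
and `u_{s+1}` is the memory determined by `(w, zs)`.  In particular the error
probability of `φ` with MAP decoding equals `(1/|𝒲|) Σ_w J_1(σ₀, u₁, w)`. -/
theorem policy_evaluation [Nonempty W] [Nonempty X] [Nonempty Y] [Nonempty Z] [Nonempty U]
    (Qf : X → PMF Y) (Qb : Y → PMF Z)
    (G2 : U → (W × U → X) → Z → W → U) (u1 : U) (φ : ℕ → W × U → X) (n : ℕ) :
    (∀ (s : ℕ) (hs : s ≤ n) (w : W) (zs : Fin s → Z),
      0 <
        (∑ ys : Fin n → Y, ∑ zf : Fin n → Z,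
          if ∀ j : Fin s, zf (Fin.castLE hs j) = zs j then
            jointP Qf Qb G2 u1 φ n w ys zf else 0) →
      (∑ ys : Fin n → Y, ∑ zf : Fin n → Z,
          if ∀ j : Fin s, zf (Fin.castLE hs j) = zs j then
            jointP Qf Qb G2 u1 φ n w ys zf *
              (1 - univ.sup fun w' : W => (beliefs Qf Qb G2 u1 φ n ys).1 w')
          else 0) /
        (∑ ys : Fin n → Y, ∑ zf : Fin n → Z,
          if ∀ j : Fin s, zf (Fin.castLE hs j) = zs j then
            jointP Qf Qb G2 u1 φ n w ys zf else 0) =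
      Jk Qf Qb G2 φ n (n - s)
        (fun b =>
          (∑ ys : Fin n → Y, ∑ zf : Fin n → Z,
            if (∀ j : Fin s, zf (Fin.castLE hs j) = zs j) ∧
                beliefs Qf Qb G2 u1 φ s (fun j => ys (Fin.castLE hs j)) = b then
              jointP Qf Qb G2 u1 φ n w ys zf else 0) /
          (∑ ys : Fin n → Y, ∑ zf : Fin n → Z,
            if ∀ j : Fin s, zf (Fin.castLE hs j) = zs j then
              jointP Qf Qb G2 u1 φ n w ys zf else 0))
        (mem G2 u1 φ w s zs) w) ∧
    ∀ gMAP : (Fin n → Y) → W,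
      (∀ (ys : Fin n → Y) (w : W),
          probWY Qf Qb G2 u1 φ n ys w ≤ probWY Qf Qb G2 u1 φ n ys (gMAP ys)) →
      (∑ w : W, ∑ ys : Fin n → Y, ∑ zs : Fin n → Z,
          if gMAP ys ≠ w then jointP Qf Qb G2 u1 φ n w ys zs else 0) =
        (Fintype.card W : ℝ≥0∞)⁻¹ * ∑ w : W, Jk Qf Qb G2 φ n n (σ0 u1) u1 w := by
  have cardW_ne : (Fintype.card W : ℝ≥0∞) ≠ 0 := by simp [Fintype.card_ne_zero]
  have cardW_ne_top : (Fintype.card W : ℝ≥0∞) ≠ ⊤ := ENNReal.natCast_ne_top _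
  constructor
  · exact fun s hs w zs hpos => P1 Qf Qb G2 u1 φ n w (n - s) s (by omega) hs zs hpos
  · intro gMAP hMAP
    set zs0 : Fin 0 → Z := fun j => j.elim0 with hzs0
    have hD0w : ∀ w : W,
        (∑ ys : Fin n → Y, ∑ zf : Fin n → Z,
          if ∀ j : Fin 0, zf (Fin.castLE (Nat.zero_le n) j) = zs0 j then
            jointP Qf Qb G2 u1 φ n w ys zf else 0) = (Fintype.card W : ℝ≥0∞)⁻¹ := by
      intro w
      have h1 := marg Qf Qb G2 u1 φ w n 0 (Nat.zero_le n) zs0 (fun _ => 1)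
      simp only [mul_one] at h1
      rw [h1, Fintype.sum_unique]
      unfold jointP
      simp
    have hJk : ∀ w : W, Jk Qf Qb G2 φ n n (σ0 u1) u1 w
        = (∑ ys : Fin n → Y, ∑ zf : Fin n → Z, jointP Qf Qb G2 u1 φ n w ys zf *
            (1 - univ.sup fun w' : W => (beliefs Qf Qb G2 u1 φ n ys).1 w')) *
          (Fintype.card W : ℝ≥0∞) := by
      intro w
      have hpos0 : 0 < ∑ ys : Fin n → Y, ∑ zf : Fin n → Z,
          if ∀ j : Fin 0, zf (Fin.castLE (Nat.zero_le n) j) = zs0 j then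
            jointP Qf Qb G2 u1 φ n w ys zf else 0 := by
        rw [hD0w w]
        exact ENNReal.inv_pos.mpr cardW_ne_top
      have h := P1 Qf Qb G2 u1 φ n w n 0 (by omega) (Nat.zero_le n) zs0 hpos0
      have hσ : (fun b => (∑ ys : Fin n → Y, ∑ zf : Fin n → Z,
            if (∀ j : Fin 0, zf (Fin.castLE (Nat.zero_le n) j) = zs0 j) ∧
                beliefs Qf Qb G2 u1 φ 0 (fun j => ys (Fin.castLE (Nat.zero_le n) j)) = b then
              jointP Qf Qb G2 u1 φ n w ys zf else 0) /
            (∑ ys : Fin n → Y, ∑ zf : Fin n → Z,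
              if ∀ j : Fin 0, zf (Fin.castLE (Nat.zero_le n) j) = zs0 j then
                jointP Qf Qb G2 u1 φ n w ys zf else 0))
          = σ0 u1 := by
        funext b
        show _ = if b = b0 u1 then (1 : ℝ≥0∞) else 0
        by_cases hb : b0 u1 = b
        · have hnum_eq : (∑ ys : Fin n → Y, ∑ zf : Fin n → Z,
              if (∀ j : Fin 0, zf (Fin.castLE (Nat.zero_le n) j) = zs0 j) ∧
                  beliefs Qf Qb G2 u1 φ 0 (fun j => ys (Fin.castLE (Nat.zero_le n) j)) = b then
                jointP Qf Qb G2 u1 φ n w ys zf else 0)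
              = ∑ ys : Fin n → Y, ∑ zf : Fin n → Z,
                if ∀ j : Fin 0, zf (Fin.castLE (Nat.zero_le n) j) = zs0 j then
                  jointP Qf Qb G2 u1 φ n w ys zf else 0 := by
            refine Finset.sum_congr rfl fun ys _ => Finset.sum_congr rfl fun zf _ => ?_
            by_cases hc : ∀ j : Fin 0, zf (Fin.castLE (Nat.zero_le n) j) = zs0 j
            · rw [if_pos hc, if_pos ⟨hc, hb⟩]
            · rw [if_neg hc, if_neg (fun h => hc h.1)]
          rw [hnum_eq, hD0w w,
            ENNReal.div_self (ENNReal.inv_ne_zero.mpr cardW_ne_top)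
              (ENNReal.inv_ne_top.mpr cardW_ne), if_pos hb.symm]
        · have hnum0 : (∑ ys : Fin n → Y, ∑ zf : Fin n → Z,
              if (∀ j : Fin 0, zf (Fin.castLE (Nat.zero_le n) j) = zs0 j) ∧
                  beliefs Qf Qb G2 u1 φ 0 (fun j => ys (Fin.castLE (Nat.zero_le n) j)) = b then
                jointP Qf Qb G2 u1 φ n w ys zf else 0) = 0 :=
            Finset.sum_eq_zero fun ys _ => Finset.sum_eq_zero fun zf _ =>
              if_neg (fun h => hb h.2)
          rw [hnum0, ENNReal.zero_div, if_neg (fun h => hb h.symm)]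
      rw [hσ] at h
      have hnumA : (∑ ys : Fin n → Y, ∑ zf : Fin n → Z,
          if ∀ j : Fin 0, zf (Fin.castLE (Nat.zero_le n) j) = zs0 j then
            jointP Qf Qb G2 u1 φ n w ys zf *
              (1 - univ.sup fun w' : W => (beliefs Qf Qb G2 u1 φ n ys).1 w') else 0)
          = ∑ ys : Fin n → Y, ∑ zf : Fin n → Z, jointP Qf Qb G2 u1 φ n w ys zf *
              (1 - univ.sup fun w' : W => (beliefs Qf Qb G2 u1 φ n ys).1 w') :=
        Finset.sum_congr rfl fun ys _ => Finset.sum_congr rfl fun zf _ =>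
          if_pos (fun j => j.elim0)
      rw [hnumA, hD0w w] at h
      have hm : mem G2 u1 φ w 0 zs0 = u1 := rfl
      rw [hm] at h
      rw [← h, div_eq_mul_inv, inv_inv]
    -- per-ys MAP identity
    have keyMAP : ∀ ys : Fin n → Y,
        (∑ w : W, if gMAP ys ≠ w then probWY Qf Qb G2 u1 φ n ys w else 0)
        = probY Qf Qb G2 u1 φ n ys *
            (1 - univ.sup fun w' : W => (beliefs Qf Qb G2 u1 φ n ys).1 w') := by
      intro ys
      by_cases hY : probY Qf Qb G2 u1 φ n ys = 0
      · rw [hY, zero_mul]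
        refine Finset.sum_eq_zero fun w _ => ?_
        have h0 : probWY Qf Qb G2 u1 φ n ys w = 0 :=
          le_antisymm (hY ▸ probWY_le_probY Qf Qb G2 u1 φ n ys w) (zero_le)
        split
        · exact h0
        · rfl
      · have hpos : 0 < probY Qf Qb G2 u1 φ n ys := pos_iff_ne_zero.mpr hY
        have hInv := belief_inv Qf Qb G2 u1 φ n ys hpos
        obtain ⟨ws, _, hws⟩ := Finset.exists_mem_eq_sup univ univ_nonempty
          (fun w' : W => (beliefs Qf Qb G2 u1 φ n ys).1 w')
        have hle_sup : ∀ w', (beliefs Qf Qb G2 u1 φ n ys).1 w'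
            ≤ (beliefs Qf Qb G2 u1 φ n ys).1 ws := fun w' =>
          hws ▸ Finset.le_sup (f := fun w' : W => (beliefs Qf Qb G2 u1 φ n ys).1 w')
            (Finset.mem_univ w')
        have hgm : probWY Qf Qb G2 u1 φ n ys (gMAP ys)
            = probY Qf Qb G2 u1 φ n ys * (beliefs Qf Qb G2 u1 φ n ys).1 ws := by
          refine le_antisymm ?_ ?_
          · rw [← (hInv (gMAP ys)).1, mul_comm]
            exact mul_le_mul_right (hle_sup (gMAP ys)) _
          · calc probY Qf Qb G2 u1 φ n ys * (beliefs Qf Qb G2 u1 φ n ys).1 ws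
                = (beliefs Qf Qb G2 u1 φ n ys).1 ws * probY Qf Qb G2 u1 φ n ys :=
                  mul_comm _ _
              _ = probWY Qf Qb G2 u1 φ n ys ws := (hInv ws).1
              _ ≤ probWY Qf Qb G2 u1 φ n ys (gMAP ys) := hMAP ys ws
        have hWYtop : probWY Qf Qb G2 u1 φ n ys (gMAP ys) ≠ ⊤ :=
          ne_top_of_le_ne_top (probY_ne_top Qf Qb G2 u1 φ n ys)
            (probWY_le_probY Qf Qb G2 u1 φ n ys (gMAP ys))
        have hsum_split : (∑ w : W, if gMAP ys ≠ w then probWY Qf Qb G2 u1 φ n ys w else 0)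
            + probWY Qf Qb G2 u1 φ n ys (gMAP ys) = probY Qf Qb G2 u1 φ n ys := by
          have hper : ∀ w : W, (if gMAP ys ≠ w then probWY Qf Qb G2 u1 φ n ys w else 0)
              + (if gMAP ys = w then probWY Qf Qb G2 u1 φ n ys w else 0)
              = probWY Qf Qb G2 u1 φ n ys w := by
            intro w
            by_cases h : gMAP ys = w <;> simp [h]
          calc (∑ w : W, if gMAP ys ≠ w then probWY Qf Qb G2 u1 φ n ys w else 0)
              + probWY Qf Qb G2 u1 φ n ys (gMAP ys)
              = (∑ w : W, if gMAP ys ≠ w then probWY Qf Qb G2 u1 φ n ys w else 0)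
                + ∑ w : W, if gMAP ys = w then probWY Qf Qb G2 u1 φ n ys w else 0 := by
                rw [Finset.sum_ite_eq univ (gMAP ys)
                  (fun w => probWY Qf Qb G2 u1 φ n ys w), if_pos (Finset.mem_univ _)]
            _ = ∑ w : W, ((if gMAP ys ≠ w then probWY Qf Qb G2 u1 φ n ys w else 0)
                + (if gMAP ys = w then probWY Qf Qb G2 u1 φ n ys w else 0)) :=
                Finset.sum_add_distrib.symm
            _ = ∑ w : W, probWY Qf Qb G2 u1 φ n ys w :=
                Finset.sum_congr rfl fun w _ => hper w
            _ = probY Qf Qb G2 u1 φ n ys := (probY_eq_sum Qf Qb G2 u1 φ n ys).symm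
        rw [ENNReal.eq_sub_of_add_eq hWYtop hsum_split, hws,
          ENNReal.mul_sub (fun _ _ => probY_ne_top Qf Qb G2 u1 φ n ys), mul_one, ← hgm]
    -- assemble
    have hRHS : (Fintype.card W : ℝ≥0∞)⁻¹ * ∑ w : W, Jk Qf Qb G2 φ n n (σ0 u1) u1 w
        = ∑ w : W, ∑ ys : Fin n → Y, ∑ zf : Fin n → Z, jointP Qf Qb G2 u1 φ n w ys zf *
            (1 - univ.sup fun w' : W => (beliefs Qf Qb G2 u1 φ n ys).1 w') := by
      rw [Finset.sum_congr rfl fun w (_ : w ∈ univ) => hJk w, ← Finset.sum_mul]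
      have hx : ∀ x : ℝ≥0∞, (Fintype.card W : ℝ≥0∞)⁻¹ * (x * (Fintype.card W : ℝ≥0∞))
          = x * ((Fintype.card W : ℝ≥0∞)⁻¹ * (Fintype.card W : ℝ≥0∞)) := fun x => by ring
      rw [hx, ENNReal.inv_mul_cancel cardW_ne cardW_ne_top, mul_one]
    rw [hRHS]
    calc (∑ w : W, ∑ ys : Fin n → Y, ∑ zs : Fin n → Z,
          if gMAP ys ≠ w then jointP Qf Qb G2 u1 φ n w ys zs else 0)
        = ∑ ys : Fin n → Y, ∑ w : W,
            (if gMAP ys ≠ w then probWY Qf Qb G2 u1 φ n ys w else 0) := by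
          rw [Finset.sum_comm]
          refine Finset.sum_congr rfl fun ys _ => Finset.sum_congr rfl fun w _ => ?_
          by_cases h : gMAP ys ≠ w
          · simp [h]
            rfl
          · simp [h]
      _ = ∑ ys : Fin n → Y, probY Qf Qb G2 u1 φ n ys *
            (1 - univ.sup fun w' : W => (beliefs Qf Qb G2 u1 φ n ys).1 w') :=
          Finset.sum_congr rfl fun ys _ => keyMAP ys
      _ = ∑ w : W, ∑ ys : Fin n → Y, ∑ zf : Fin n → Z, jointP Qf Qb G2 u1 φ n w ys zf *
            (1 - univ.sup fun w' : W => (beliefs Qf Qb G2 u1 φ n ys).1 w') := by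
          rw [Finset.sum_comm]
          refine Finset.sum_congr rfl fun ys _ => ?_
          rw [probY_eq_sum, Finset.sum_mul]
          exact Finset.sum_congr rfl fun w _ => by rw [← Finset.sum_mul]; rfl

end NoisyFeedback
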